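/- A complete multipartite graph is 1-extendable if and only if all its parts have the same cardinality. -/

import Mathlib

open scoped Classical

variable {V : Type*}

/-- `S` is an independent set of the graph `G`. -/
def IndepF (G : SimpleGraph V) (S : Finset V) : Prop :=
  ∀ u ∈ S, ∀ v ∈ S, ¬ G.Adj u v

/-- The independence number of `G`. -/
noncomputable def alphaN [Fintype V] (G : SimpleGraph V) : ℕ :=
  Finset.univ.powerset.sup fun S => if IndepF G S then S.card else 0

/-- `G` is 1-extendable: every vertex belongs to a maximum independent set. -/
def OneExt [Fintype V] (G : SimpleGraph V) : Prop :=
  ∀ v : V, ∃ S : Finset V, v ∈ S ∧ IndepF G S ∧ S.card = alphaN G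

/-- The 1-extendable chromatic number of `G`. -/
noncomputable def chiOneExt [Fintype V] (G : SimpleGraph V) : ℕ :=
  sInf {k | ∃ c : V → Fin k, ∀ i : Fin k, OneExt (G.induce {v | c v = i})}

/-- The join (complete sum) of two graphs. -/
def gJoin {α β : Type*} (G : SimpleGraph α) (H : SimpleGraph β) : SimpleGraph (α ⊕ β) where
  Adj u v := match u, v with
    | Sum.inl u, Sum.inl v => G.Adj u v
    | Sum.inr u, Sum.inr v => H.Adj u v
    | Sum.inl _, Sum.inr _ => True
    | Sum.inr _, Sum.inl _ => True
  symm := ⟨by rintro (u|u) (v|v) h <;> simp_all [SimpleGraph.adj_comm]⟩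
  loopless := ⟨by rintro (u|u) h <;> simp_all⟩

/-- A complete multipartite graph (parts are the fibers of ) is 1-extendable iff
it is balanced, i.e. all parts have the same cardinality. -/
theorem completeMultipartite_oneExt_iff {ι : Type*} [Fintype V] [Fintype ι]
    (p : V → ι) (hp : Function.Surjective p) (G : SimpleGraph V)
    (hG : ∀ u v : V, G.Adj u v ↔ p u ≠ p v) :
    OneExt G ↔ ∀ i j : ι,
      (Finset.univ.filter (fun v => p v = i)).card =
      (Finset.univ.filter (fun v => p v = j)).card := by
  classical
  set f : ι → ℕ := fun i => (Finset.univ.filter (fun v => p v = i)).card with hf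
  have hindep : ∀ S : Finset V, IndepF G S ↔ ∀ u ∈ S, ∀ v ∈ S, p u = p v := by
    intro S
    constructor
    · intro h u hu v hv
      by_contra hne
      exact h u hu v hv ((hG u v).2 hne)
    · intro h u hu v hv hadj
      exact (hG u v).1 hadj (h u hu v hv)
  have hfiber_indep : ∀ i, IndepF G (Finset.univ.filter fun v => p v = i) := by
    intro i
    rw [hindep]
    intro u hu v hv
    simp only [Finset.mem_filter] at hu hv
    rw [hu.2, hv.2]
  have halpha_ge : ∀ i, f i ≤ alphaN G := by
    intro i
    have := Finset.le_sup (f := fun S : Finset V => if IndepF G S then S.card else 0)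
      (Finset.mem_powerset.2 (Finset.subset_univ (Finset.univ.filter fun v => p v = i)))
    simpa [alphaN, hfiber_indep i] using this
  have halpha_le : ∀ S : Finset V, IndepF G S → ∀ v ∈ S, S.card ≤ f (p v) := by
    intro S hS v hv
    apply Finset.card_le_card
    intro u hu
    simp only [hf, Finset.mem_filter, Finset.mem_univ, true_and]
    exact (hindep S).1 hS u hu v hv
  constructor
  · intro hone i j
    have key : ∀ i, f i = alphaN G := by
      intro i
      obtain ⟨v, hv⟩ := hp i
      obtain ⟨S, hvS, hSi, hcard⟩ := hone v
      have h1 : alphaN G ≤ f i := by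
        rw [← hcard, ← hv]; exact halpha_le S hSi v hvS
      exact le_antisymm (halpha_ge i) h1
    rw [show (Finset.univ.filter (fun v => p v = i)).card = f i from rfl,
        show (Finset.univ.filter (fun v => p v = j)).card = f j from rfl, key i, key j]
  · intro hbal v
    refine ⟨Finset.univ.filter fun u => p u = p v, by simp, hfiber_indep _, ?_⟩
    apply le_antisymm (halpha_ge (p v))
    apply Finset.sup_le
    intro S hS
    split_ifs with h
    · rcases S.eq_empty_or_nonempty with rfl | ⟨u, hu⟩
      · simp
      · calc S.card ≤ f (p u) := halpha_le S h u hu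
          _ = f (p v) := hbal _ _
    · exact Nat.zero_le _
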